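/- Correctness of garbage collection for the CESK* machine: if state ς = (e, ρ, σ, κ) steps to ς' in the CESK* machine, and σ|L is the restriction of σ to the addresses L live in ς (computed by the GC machine from the roots LL(e,ρ) ∪ LL(κ)), then (e, ρ, σ|L, κ) steps to a state that is identical to ς' up to restriction of its store to its own live addresses. -/
import Mathlib


/- Statement 13: correctness of garbage collection for the CESK* machine:
   stepping commutes with restriction of the store to the live addresses. -/

inductive Exp : Type
  | ref : String → Exp
  | lam : String → Exp → Exp
  | app : Exp → Exp → Exp
deriving DecidableEq

def Exp.fv : Exp → List String
  | .ref x => [x]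
  | .lam x e => e.fv.filter (· ≠ x)
  | .app e₀ e₁ => e₀.fv ++ e₁.fv

abbrev Addr := ℕ
abbrev Env := List (String × Addr)

inductive Kont : Type
  | mt
  | ar (e : Exp) (ρ : Env) (a : Addr)
  | fn (v : Exp) (ρ : Env) (a : Addr)

inductive Storable : Type
  | clo (v : Exp) (ρ : Env)
  | kont (κ : Kont)

abbrev Store := Addr → Option Storable
abbrev State := Exp × Env × Store × Kont

/-- The CESK* machine (store-allocated continuations, nondeterministic fresh
    allocation). -/
inductive Step : State → State → Prop
  | var {x ρ σ κ a v ρ'} :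
      List.lookup x ρ = some a → σ a = some (.clo v ρ') →
      Step (.ref x, ρ, σ, κ) (v, ρ', σ, κ)
  | app {e₀ e₁ ρ σ κ} {a : Addr} :
      σ a = none →
      Step (.app e₀ e₁, ρ, σ, κ)
        (e₀, ρ, Function.update σ a (some (.kont κ)), .ar e₁ ρ a)
  | arg {x e ρ σ e' ρ' a} :
      Step (.lam x e, ρ, σ, .ar e' ρ' a) (e', ρ', σ, .fn (.lam x e) ρ a)
  | beta {x e ρ σ y e' ρ' b κ} {a : Addr} :
      σ b = some (.kont κ) → σ a = none →
      Step (.lam x e, ρ, σ, .fn (.lam y e') ρ' b)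
        (e', (y, a) :: ρ', Function.update σ a (some (.clo (.lam x e) ρ)), κ)

/-- The addresses directly mentioned by a continuation frame: its saved
    continuation pointer, and the environment restricted to the free
    variables of its expression component. -/
inductive KDirect : Kont → Addr → Prop
  | ar_ptr {e ρ a} : KDirect (.ar e ρ a) a
  | ar_env {e ρ a x b} :
      x ∈ e.fv → List.lookup x ρ = some b → KDirect (.ar e ρ a) b
  | fn_ptr {v ρ a} : KDirect (.fn v ρ a) a
  | fn_env {v ρ a x b} :
      x ∈ v.fv → List.lookup x ρ = some b → KDirect (.fn v ρ a) b

/-- The live addresses of a state (e, ρ, σ, κ): the least set containing the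
    roots (ρ restricted to fv(e), and the addresses of κ) and closed under
    the live-locations of stored values. -/
inductive Live (σ : Store) (e : Exp) (ρ : Env) (κ : Kont) : Addr → Prop
  | root_env {x a} : x ∈ e.fv → List.lookup x ρ = some a → Live σ e ρ κ a
  | root_kont {a} : KDirect κ a → Live σ e ρ κ a
  | step_clo {a v ρ' x b} :
      Live σ e ρ κ a → σ a = some (.clo v ρ') →
      x ∈ v.fv → List.lookup x ρ' = some b → Live σ e ρ κ b
  | step_kont {a κ' b} :
      Live σ e ρ κ a → σ a = some (.kont κ') → KDirect κ' b → Live σ e ρ κ b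

open Classical in
/-- Restriction of a store to a set of addresses. -/
noncomputable def restrict (σ : Store) (L : Addr → Prop) : Store :=
  fun a => if L a then σ a else none

/-- Live addresses of a whole state. -/
def liveOf : State → Addr → Prop
  | (e, ρ, σ, κ) => Live σ e ρ κ

/-- Restriction of a whole state's store to its live addresses. -/
noncomputable def gcState : State → State
  | (e, ρ, σ, κ) => (e, ρ, restrict σ (Live σ e ρ κ), κ)

section Helpers

theorem restrict_pos {σ : Store} {L : Addr → Prop} {a : Addr} (h : L a) :
    restrict σ L a = σ a := by simp [restrict, h]

theorem restrict_neg {σ : Store} {L : Addr → Prop} {a : Addr} (h : ¬ L a) :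
    restrict σ L a = none := by simp [restrict, h]

theorem restrict_none {σ : Store} {L : Addr → Prop} {a : Addr} (h : σ a = none) :
    restrict σ L a = none := by
  by_cases hL : L a
  · rw [restrict_pos hL, h]
  · exact restrict_neg hL

/-- Live addresses only depend on the store at live addresses. -/
theorem live_store_congr {σ σ' : Store} {e : Exp} {ρ : Env} {κ : Kont}
    (h : ∀ a, Live σ e ρ κ a → σ' a = σ a) :
    ∀ a, Live σ' e ρ κ a ↔ Live σ e ρ κ a := by
  intro a
  constructor
  · intro hl
    induction hl with
    | root_env hx hlk => exact Live.root_env hx hlk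
    | root_kont hk => exact Live.root_kont hk
    | step_clo _ hσ hx hlk ih =>
        exact Live.step_clo ih ((h _ ih) ▸ hσ) hx hlk
    | step_kont _ hσ hk ih =>
        exact Live.step_kont ih ((h _ ih) ▸ hσ) hk
  · intro hl
    induction hl with
    | root_env hx hlk => exact Live.root_env hx hlk
    | root_kont hk => exact Live.root_kont hk
    | step_clo hla hσ hx hlk ih =>
        exact Live.step_clo ih ((h _ hla).trans hσ) hx hlk
    | step_kont hla hσ hk ih =>
        exact Live.step_kont ih ((h _ hla).trans hσ) hk

/-- Any predicate containing the roots and closed under store steps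
    contains all live addresses. -/
theorem live_sub {σ : Store} {e : Exp} {ρ : Env} {κ : Kont} (P : Addr → Prop)
    (henv : ∀ x a, x ∈ e.fv → List.lookup x ρ = some a → P a)
    (hkont : ∀ a, KDirect κ a → P a)
    (hclo : ∀ a v ρ' x b, P a → σ a = some (.clo v ρ') → x ∈ v.fv →
        List.lookup x ρ' = some b → P b)
    (hkont2 : ∀ a κ' b, P a → σ a = some (.kont κ') → KDirect κ' b → P b) :
    ∀ b, Live σ e ρ κ b → P b := by
  intro b hl
  induction hl with
  | root_env hx hlk => exact henv _ _ hx hlk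
  | root_kont hk => exact hkont _ hk
  | step_clo _ hσ hx hlk ih => exact hclo _ _ _ _ _ ih hσ hx hlk
  | step_kont _ hσ hk ih => exact hkont2 _ _ _ ih hσ hk

theorem restrict_congr {τ σ : Store} {L' L₂ : Addr → Prop}
    (hiff : ∀ a, L' a ↔ L₂ a) (hag : ∀ a, L₂ a → τ a = σ a) :
    restrict τ L' = restrict σ L₂ := by
  funext c
  by_cases hc : L₂ c
  · rw [restrict_pos ((hiff c).mpr hc), restrict_pos hc, hag c hc]
  · rw [restrict_neg (fun h => hc ((hiff c).mp h)), restrict_neg hc]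

end Helpers

theorem gc_correct (ς ς' : State) (h : Step ς ς') :
    ∃ ς'' : State, Step (gcState ς) ς'' ∧ gcState ς'' = gcState ς' := by
  cases h with
  | @var x ρ σ κ a v ρ' hlk hσ =>
      set L := Live σ (.ref x) ρ κ with hL
      have hxfv : x ∈ (Exp.ref x).fv := by simp [Exp.fv]
      have haL : L a := Live.root_env hxfv hlk
      have hsub : ∀ c, Live σ v ρ' κ c → L c := by
        refine live_sub L ?_ ?_ ?_ ?_
        · intro x' c hx' hlk'
          exact Live.step_clo haL hσ hx' hlk'
        · intro c hk
          exact Live.root_kont hk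
        · intro c v'' ρ'' x' b' hP hσ' hx' hlk'
          exact Live.step_clo hP hσ' hx' hlk'
        · intro c κ' b' hP hσ' hk'
          exact Live.step_kont hP hσ' hk'
      have hag : ∀ c, Live σ v ρ' κ c → restrict σ L c = σ c :=
        fun c hc => restrict_pos (hsub c hc)
      have hiff := live_store_congr hag
      refine ⟨(v, ρ', restrict σ L, κ), ?_, ?_⟩
      · exact Step.var hlk (by rw [restrict_pos haL, hσ])
      · simp only [gcState]
        rw [restrict_congr hiff hag]
  | @app e₀ e₁ ρ σ κ a hσa =>
      set L := Live σ (.app e₀ e₁) ρ κ with hL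
      set σ₁ := Function.update σ a (some (.kont κ)) with hσ₁
      set τ := Function.update (restrict σ L) a (some (.kont κ)) with hτ
      have hsub : ∀ c, Live σ₁ e₀ ρ (.ar e₁ ρ a) c → c = a ∨ L c := by
        refine live_sub _ ?_ ?_ ?_ ?_
        · intro x' c hx' hlk'
          exact Or.inr (Live.root_env (by simp [Exp.fv, hx']) hlk')
        · intro c hk
          cases hk with
          | ar_ptr => exact Or.inl rfl
          | ar_env hx' hlk' =>
              exact Or.inr (Live.root_env (by simp [Exp.fv]; right; assumption) hlk')
        · intro c v'' ρ'' x' b' hP hσ' hx' hlk'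
          by_cases hca : c = a
          · subst hca; rw [hσ₁, Function.update_self] at hσ'; cases hσ'
          · rw [hσ₁, Function.update_of_ne hca] at hσ'
            rcases hP with h | h
            · exact absurd h hca
            · exact Or.inr (Live.step_clo h hσ' hx' hlk')
        · intro c κ' b' hP hσ' hk'
          by_cases hca : c = a
          · subst hca; rw [hσ₁, Function.update_self] at hσ'
            cases hσ'
            exact Or.inr (Live.root_kont hk')
          · rw [hσ₁, Function.update_of_ne hca] at hσ'
            rcases hP with h | h
            · exact absurd h hca
            · exact Or.inr (Live.step_kont h hσ' hk')
      have hag : ∀ c, Live σ₁ e₀ ρ (.ar e₁ ρ a) c → τ c = σ₁ c := by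
        intro c hc
        by_cases hca : c = a
        · subst hca; rw [hτ, hσ₁, Function.update_self, Function.update_self]
        · rcases hsub c hc with h | h
          · exact absurd h hca
          · rw [hτ, hσ₁, Function.update_of_ne hca, Function.update_of_ne hca,
              restrict_pos h]
      have hiff := live_store_congr hag
      refine ⟨(e₀, ρ, τ, .ar e₁ ρ a), ?_, ?_⟩
      · exact Step.app (restrict_none hσa)
      · simp only [gcState]
        rw [restrict_congr hiff hag]
  | @arg x e ρ σ e' ρ' a =>
      set L := Live σ (.lam x e) ρ (.ar e' ρ' a) with hL
      have hsub : ∀ c, Live σ e' ρ' (.fn (.lam x e) ρ a) c → L c := by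
        refine live_sub L ?_ ?_ ?_ ?_
        · intro x' c hx' hlk'
          exact Live.root_kont (KDirect.ar_env hx' hlk')
        · intro c hk
          cases hk with
          | fn_ptr => exact Live.root_kont KDirect.ar_ptr
          | fn_env hx' hlk' => exact Live.root_env hx' hlk'
        · intro c v'' ρ'' x' b' hP hσ' hx' hlk'
          exact Live.step_clo hP hσ' hx' hlk'
        · intro c κ' b' hP hσ' hk'
          exact Live.step_kont hP hσ' hk'
      have hag : ∀ c, Live σ e' ρ' (.fn (.lam x e) ρ a) c → restrict σ L c = σ c :=
        fun c hc => restrict_pos (hsub c hc)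
      have hiff := live_store_congr hag
      refine ⟨(e', ρ', restrict σ L, .fn (.lam x e) ρ a), Step.arg, ?_⟩
      simp only [gcState]
      rw [restrict_congr hiff hag]
  | @beta x e ρ σ y e' ρ' b κ a hσb hσa =>
      set L := Live σ (.lam x e) ρ (.fn (.lam y e') ρ' b) with hL
      set σ₁ := Function.update σ a (some (.clo (.lam x e) ρ)) with hσ₁
      set τ := Function.update (restrict σ L) a (some (.clo (.lam x e) ρ)) with hτ
      have hbL : L b := Live.root_kont KDirect.fn_ptr
      have hsub : ∀ c, Live σ₁ e' ((y, a) :: ρ') κ c → c = a ∨ L c := by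
        refine live_sub _ ?_ ?_ ?_ ?_
        · intro x' c hx' hlk'
          by_cases hxy : x' = y
          · subst hxy
            simp [List.lookup, beq_iff_eq] at hlk'
            exact Or.inl hlk'.symm
          · have hb' : (x' == y) = false := by simp [hxy]
            simp only [List.lookup, hb'] at hlk'
            refine Or.inr (Live.root_kont (KDirect.fn_env ?_ hlk'))
            simp [Exp.fv, List.mem_filter, hx', hxy]
        · intro c hk
          exact Or.inr (Live.step_kont hbL hσb hk)
        · intro c v'' ρ'' x' b' hP hσ' hx' hlk'
          by_cases hca : c = a
          · subst hca; rw [hσ₁, Function.update_self] at hσ'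
            cases hσ'
            exact Or.inr (Live.root_env hx' hlk')
          · rw [hσ₁, Function.update_of_ne hca] at hσ'
            rcases hP with h | h
            · exact absurd h hca
            · exact Or.inr (Live.step_clo h hσ' hx' hlk')
        · intro c κ' b' hP hσ' hk'
          by_cases hca : c = a
          · subst hca; rw [hσ₁, Function.update_self] at hσ'; cases hσ'
          · rw [hσ₁, Function.update_of_ne hca] at hσ'
            rcases hP with h | h
            · exact absurd h hca
            · exact Or.inr (Live.step_kont h hσ' hk')
      have hag : ∀ c, Live σ₁ e' ((y, a) :: ρ') κ c → τ c = σ₁ c := by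
        intro c hc
        by_cases hca : c = a
        · subst hca; rw [hτ, hσ₁, Function.update_self, Function.update_self]
        · rcases hsub c hc with h | h
          · exact absurd h hca
          · rw [hτ, hσ₁, Function.update_of_ne hca, Function.update_of_ne hca,
              restrict_pos h]
      have hiff := live_store_congr hag
      refine ⟨(e', (y, a) :: ρ', τ, κ), ?_, ?_⟩
      · exact Step.beta (by rw [restrict_pos hbL, hσb]) (restrict_none hσa)
      · simp only [gcState]
        rw [restrict_congr hiff hag]
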